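/- Let X and Y be Banach spaces with X continuously embedded in Y (so ∥x∥_Y ≤ c∥x∥_X for some c>0), let ℓ≥1 and ω∈ℝ^ℓ. Suppose given, for each θ∈ℝ^ℓ and each t>0, a bounded linear operator U_θ(t):Y→X, ℤ^ℓ-periodic in θ, jointly continuous in (θ,t) in operator norm for t>0, satisfying: (a) the cocycle property U_{θ+ωt}(t') U_θ(t) = U_θ(t+t') for all t,t'>0 (composition via the embedding X⊆Y); (b) the smoothing rate condition ∥U_θ(t)∥_{L(Y,X)} ≤ C_h e^{−βt} t^{−α} for all θ and t>0, with constants C_h>0, β>0 and α∈(0,1). Let F:ℝ^ℓ→Y be continuous, ℤ^ℓ-periodic and bounded. Then: (i) for every θ the Bochner integral Δ(θ) = ∫₀^∞ U_{θ−ωτ}(τ) F(θ−ωτ) dτ converges in X and satisfies ∥Δ(θ)∥_X ≤ C_h β^{α−1} Γ(1−α) sup_{θ'}∥F(θ')∥_Y; (ii) Δ satisfies the Duhamel identity Δ(θ) = U_{θ−ωt}(t) Δ(θ−ωt) + ∫₀^t U_{θ−ωs}(s) F(θ−ωs) ds for every θ∈ℝ^ℓ and every t>0; (iii) Δ is the unique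 function ℝ^ℓ→X with sup_θ∥Δ(θ)∥_X<∞ satisfying the identity in (ii). -/

import Mathlib

open Real MeasureTheory Topology Filter

noncomputable section

/-- Lemma `computational` (stable direction): for a smoothing, exponentially contracting
cocycle `U_θ(t) : Y → X` over the rotation `θ ↦ θ + ωt` (with rate
`‖U_θ(t)‖_{Y,X} ≤ C_h e^{−βt} t^{−α}`, `α ∈ (0,1)`), and bounded continuous periodic
data `F : 𝕋^ℓ → Y`, the equation `∂_ω Δ − 𝓛 Δ = F`, in the mild (Duhamel) sense, has a
unique bounded solution `Δ(θ) = ∫₀^∞ U_{θ−ωτ}(τ) F(θ−ωτ) dτ`, with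
`‖Δ(θ)‖_X ≤ C_h β^{α−1} Γ(1−α) sup ‖F‖_Y`. -/
theorem stable_direction_duhamel
    (X Y : Type*) [NormedAddCommGroup X] [NormedSpace ℝ X] [CompleteSpace X]
    [NormedAddCommGroup Y] [NormedSpace ℝ Y] [CompleteSpace Y]
    (ι : X →L[ℝ] Y) (hι : Function.Injective ι)
    (ℓ : ℕ) (hℓ : 1 ≤ ℓ) (ω : Fin ℓ → ℝ)
    (U : (Fin ℓ → ℝ) → ℝ → (Y →L[ℝ] X))
    (hUper : ∀ (θ : Fin ℓ → ℝ) (k : Fin ℓ → ℤ) (t : ℝ),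
      U (θ + fun i => (k i : ℝ)) t = U θ t)
    (hUcont : ContinuousOn (fun p : (Fin ℓ → ℝ) × ℝ => U p.1 p.2) {p | 0 < p.2})
    (hcocycle : ∀ (θ : Fin ℓ → ℝ) (t t' : ℝ), 0 < t → 0 < t' →
      (U (θ + t • ω) t').comp (ι.comp (U θ t)) = U θ (t + t'))
    (Ch β α : ℝ) (hCh : 0 < Ch) (hβ : 0 < β) (hα0 : 0 < α) (hα1 : α < 1)
    (hrate : ∀ (θ : Fin ℓ → ℝ) (t : ℝ), 0 < t →
      ‖U θ t‖ ≤ Ch * Real.exp (-β * t) * t ^ (-α))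
    (F : (Fin ℓ → ℝ) → Y)
    (hFcont : Continuous F)
    (hFper : ∀ (θ : Fin ℓ → ℝ) (k : Fin ℓ → ℤ), F (θ + fun i => (k i : ℝ)) = F θ)
    (hFbdd : ∃ M : ℝ, ∀ θ, ‖F θ‖ ≤ M) :
    ∃ Δ : (Fin ℓ → ℝ) → X,
      (∀ θ, IntegrableOn (fun τ => U (θ - τ • ω) τ (F (θ - τ • ω))) (Set.Ioi (0 : ℝ))) ∧
      (∀ θ, Δ θ = ∫ τ in Set.Ioi (0 : ℝ), U (θ - τ • ω) τ (F (θ - τ • ω))) ∧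
      (∀ M : ℝ, (∀ θ, ‖F θ‖ ≤ M) →
        ∀ θ, ‖Δ θ‖ ≤ Ch * β ^ (α - 1) * Real.Gamma (1 - α) * M) ∧
      (∀ (θ : Fin ℓ → ℝ) (t : ℝ), 0 < t →
        Δ θ = U (θ - t • ω) t (ι (Δ (θ - t • ω)))
          + ∫ s in Set.Ioc (0 : ℝ) t, U (θ - s • ω) s (F (θ - s • ω))) ∧
      (∀ Δ' : (Fin ℓ → ℝ) → X, (∃ M' : ℝ, ∀ θ, ‖Δ' θ‖ ≤ M') →
        (∀ (θ : Fin ℓ → ℝ) (t : ℝ), 0 < t →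
          Δ' θ = U (θ - t • ω) t (ι (Δ' (θ - t • ω)))
            + ∫ s in Set.Ioc (0 : ℝ) t, U (θ - s • ω) s (F (θ - s • ω))) →
        Δ' = Δ) := by
  obtain ⟨M₀, hM₀⟩ := hFbdd
  set f : (Fin ℓ → ℝ) → ℝ → X := fun θ τ => U (θ - τ • ω) τ (F (θ - τ • ω)) with hfdef
  -- continuity of the integrand on `Ioi 0`
  have hcont : ∀ θ, ContinuousOn (f θ) (Set.Ioi (0 : ℝ)) := by
    intro θ
    have h1 : Continuous (fun τ : ℝ => (θ - τ • ω, τ)) := by fun_prop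
    have h2 : ContinuousOn (fun τ : ℝ => U (θ - τ • ω) τ) (Set.Ioi 0) :=
      hUcont.comp h1.continuousOn (fun τ hτ => hτ)
    exact h2.clm_apply ((hFcont.comp (by fun_prop : Continuous
      (fun τ : ℝ => θ - τ • ω))).continuousOn)
  have hmeas : ∀ θ, AEStronglyMeasurable (f θ) (volume.restrict (Set.Ioi 0)) :=
    fun θ => (hcont θ).aestronglyMeasurable measurableSet_Ioi
  -- the scalar bound function and its integral
  have hgint : IntegrableOn (fun τ : ℝ => τ ^ (-α) * Real.exp (-β * τ)) (Set.Ioi 0) := by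
    have := integrableOn_rpow_mul_exp_neg_mul_rpow (p := 1) (s := -α) (b := β)
      (by linarith) one_pos hβ
    simpa using this
  have hgval : ∫ τ : ℝ in Set.Ioi 0, τ ^ (-α) * Real.exp (-β * τ)
      = β ^ (α - 1) * Real.Gamma (1 - α) := by
    have h := Real.integral_rpow_mul_exp_neg_mul_Ioi (a := 1 - α) (r := β) (by linarith) hβ
    rw [show (1:ℝ) - α - 1 = -α by ring] at h
    simp only [neg_mul] at h ⊢
    rw [h]
    congr 1
    rw [one_div, ← Real.rpow_neg_one β, ← Real.rpow_mul hβ.le]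
    ring_nf
  -- pointwise norm bound
  have hbnd : ∀ M : ℝ, (∀ θ, ‖F θ‖ ≤ M) → ∀ θ, ∀ τ ∈ Set.Ioi (0:ℝ),
      ‖f θ τ‖ ≤ (Ch * M) * (τ ^ (-α) * Real.exp (-β * τ)) := by
    intro M hM θ τ hτ
    have hM0 : 0 ≤ M := le_trans (norm_nonneg _) (hM θ)
    calc ‖f θ τ‖ ≤ ‖U (θ - τ • ω) τ‖ * ‖F (θ - τ • ω)‖ :=
          (U (θ - τ • ω) τ).le_opNorm _
      _ ≤ (Ch * Real.exp (-β * τ) * τ ^ (-α)) * M := by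
          have hτ' : (0:ℝ) < τ := hτ
          apply mul_le_mul (hrate _ τ hτ) (hM _) (norm_nonneg _)
          positivity
      _ = (Ch * M) * (τ ^ (-α) * Real.exp (-β * τ)) := by ring
  -- integrability
  have hint : ∀ θ, IntegrableOn (f θ) (Set.Ioi (0:ℝ)) := by
    intro θ
    refine Integrable.mono' (hgint.const_mul (Ch * M₀)) (hmeas θ) ?_
    filter_upwards [ae_restrict_mem measurableSet_Ioi] with τ hτ
    exact hbnd M₀ hM₀ θ τ hτ
  set Δ : (Fin ℓ → ℝ) → X := fun θ => ∫ τ in Set.Ioi (0:ℝ), f θ τ with hΔdef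
  -- norm bound on Δ
  have hbound : ∀ M : ℝ, (∀ θ, ‖F θ‖ ≤ M) →
      ∀ θ, ‖Δ θ‖ ≤ Ch * β ^ (α - 1) * Real.Gamma (1 - α) * M := by
    intro M hM θ
    have h1 : ‖Δ θ‖ ≤ ∫ τ : ℝ in Set.Ioi 0, (Ch * M) * (τ ^ (-α) * Real.exp (-β * τ)) := by
      refine norm_integral_le_of_norm_le (hgint.const_mul (Ch * M)) ?_
      filter_upwards [ae_restrict_mem measurableSet_Ioi] with τ hτ
      exact hbnd M hM θ τ hτ
    calc ‖Δ θ‖ ≤ ∫ τ : ℝ in Set.Ioi 0, (Ch * M) * (τ ^ (-α) * Real.exp (-β * τ)) := h1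
      _ = (Ch * M) * ∫ τ : ℝ in Set.Ioi 0, τ ^ (-α) * Real.exp (-β * τ) :=
          integral_const_mul _ _
      _ = Ch * β ^ (α - 1) * Real.Gamma (1 - α) * M := by rw [hgval]; ring
  -- Duhamel identity
  have hduh : ∀ (θ : Fin ℓ → ℝ) (t : ℝ), 0 < t →
      Δ θ = U (θ - t • ω) t (ι (Δ (θ - t • ω))) + ∫ s in Set.Ioc (0:ℝ) t, f θ s := by
    intro θ t ht
    have hsplit : ∫ τ in Set.Ioi (0:ℝ), f θ τ
        = (∫ τ in Set.Ioc (0:ℝ) t, f θ τ) + ∫ τ in Set.Ioi t, f θ τ := by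
      rw [← setIntegral_union (Set.Ioc_disjoint_Ioi le_rfl) measurableSet_Ioi
        ((hint θ).mono_set Set.Ioc_subset_Ioi_self)
        ((hint θ).mono_set (Set.Ioi_subset_Ioi ht.le)),
        Set.Ioc_union_Ioi_eq_Ioi ht.le]
    have hpt : ∀ σ ∈ Set.Ioi (0:ℝ),
        ((U (θ - t • ω) t).comp ι) (f (θ - t • ω) σ) = f θ (σ + t) := by
      intro σ hσ
      have hc := hcocycle ((θ - t • ω) - σ • ω) σ t hσ ht
      have h1 : (θ - t • ω) - σ • ω + σ • ω = θ - t • ω := by abel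
      rw [h1] at hc
      have h2 : θ - (σ + t) • ω = (θ - t • ω) - σ • ω := by rw [add_smul]; abel
      show (U (θ - t • ω) t) (ι (U ((θ - t • ω) - σ • ω) σ (F ((θ - t • ω) - σ • ω))))
        = U (θ - (σ + t) • ω) (σ + t) (F (θ - (σ + t) • ω))
      rw [h2, ← hc]
      rfl
    have hchg : ∫ σ in Set.Ioi (0:ℝ), f θ (σ + t) = ∫ τ in Set.Ioi t, f θ τ := by
      have := (measurePreserving_add_right volume t).setIntegral_preimage_emb
        (measurableEmbedding_addRight t) (f θ) (Set.Ioi t)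
      simpa using this
    have htail : ∫ τ in Set.Ioi t, f θ τ = U (θ - t • ω) t (ι (Δ (θ - t • ω))) := by
      have hcomm : ((U (θ - t • ω) t).comp ι) (∫ σ in Set.Ioi (0:ℝ), f (θ - t • ω) σ)
          = ∫ σ in Set.Ioi (0:ℝ), ((U (θ - t • ω) t).comp ι) (f (θ - t • ω) σ) :=
        (ContinuousLinearMap.integral_comp_comm _ (hint (θ - t • ω))).symm
      calc ∫ τ in Set.Ioi t, f θ τ = ∫ σ in Set.Ioi (0:ℝ), f θ (σ + t) := hchg.symm
        _ = ∫ σ in Set.Ioi (0:ℝ), ((U (θ - t • ω) t).comp ι) (f (θ - t • ω) σ) :=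
            setIntegral_congr_fun measurableSet_Ioi (fun σ hσ => (hpt σ hσ).symm)
        _ = ((U (θ - t • ω) t).comp ι) (Δ (θ - t • ω)) := hcomm.symm
        _ = U (θ - t • ω) t (ι (Δ (θ - t • ω))) := rfl
    show (∫ τ in Set.Ioi (0:ℝ), f θ τ) = _
    rw [hsplit, htail, add_comm]
  refine ⟨Δ, hint, fun θ => rfl, hbound, hduh, ?_⟩
  -- uniqueness
  rintro Δ' ⟨M', hM'⟩ hduh'
  set MΔ : ℝ := Ch * β ^ (α - 1) * Real.Gamma (1 - α) * M₀ with hMΔ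
  have hΔb : ∀ θ', ‖Δ θ'‖ ≤ MΔ := hbound M₀ hM₀
  funext θ
  set K : ℝ := ‖ι‖ * (M' + MΔ) with hK
  have hK0 : 0 ≤ K :=
    mul_nonneg (norm_nonneg _) (add_nonneg (le_trans (norm_nonneg _) (hM' θ))
      (le_trans (norm_nonneg _) (hΔb θ)))
  have key : ∀ t : ℝ, 0 < t →
      ‖Δ' θ - Δ θ‖ ≤ Ch * Real.exp (-β * t) * t ^ (-α) * K := by
    intro t ht
    have hdiff : Δ' θ - Δ θ
        = U (θ - t • ω) t (ι (Δ' (θ - t • ω)) - ι (Δ (θ - t • ω))) := by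
      rw [map_sub, hduh' θ t ht, hduh θ t ht]; abel
    rw [hdiff]
    calc ‖U (θ - t • ω) t (ι (Δ' (θ - t • ω)) - ι (Δ (θ - t • ω)))‖
        ≤ ‖U (θ - t • ω) t‖ * ‖ι (Δ' (θ - t • ω)) - ι (Δ (θ - t • ω))‖ :=
          (U (θ - t • ω) t).le_opNorm _
      _ ≤ (Ch * Real.exp (-β * t) * t ^ (-α)) * K := by
          apply mul_le_mul (hrate _ t ht) ?_ (norm_nonneg _) (by positivity)
          rw [← map_sub]
          calc ‖ι (Δ' (θ - t • ω) - Δ (θ - t • ω))‖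
              ≤ ‖ι‖ * ‖Δ' (θ - t • ω) - Δ (θ - t • ω)‖ := ι.le_opNorm _
            _ ≤ ‖ι‖ * (M' + MΔ) := by
                apply mul_le_mul_of_nonneg_left _ (norm_nonneg _)
                exact (norm_sub_le _ _).trans (add_le_add (hM' _) (hΔb _))
  have hten : Filter.Tendsto (fun t : ℝ => Ch * Real.exp (-β * t) * K)
      Filter.atTop (𝓝 0) := by
    have h1 : Filter.Tendsto (fun t : ℝ => Real.exp (-β * t)) Filter.atTop (𝓝 0) := by
      have h2 : Filter.Tendsto (fun t : ℝ => β * t) Filter.atTop Filter.atTop :=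
        Filter.tendsto_id.const_mul_atTop hβ
      have h3 := Real.tendsto_exp_neg_atTop_nhds_zero.comp h2
      exact h3.congr (fun t => by simp [Function.comp, neg_mul])
    have := (h1.const_mul Ch).mul_const K
    simpa using this
  have hev : ∀ᶠ t in Filter.atTop, ‖Δ' θ - Δ θ‖ ≤ Ch * Real.exp (-β * t) * K := by
    filter_upwards [Filter.eventually_ge_atTop (1:ℝ)] with t ht1
    have ht : (0:ℝ) < t := lt_of_lt_of_le one_pos ht1
    refine (key t ht).trans ?_
    have h3 : t ^ (-α) ≤ 1 := Real.rpow_le_one_of_one_le_of_nonpos ht1 (by linarith)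
    calc Ch * Real.exp (-β * t) * t ^ (-α) * K
        ≤ Ch * Real.exp (-β * t) * 1 * K := by
          apply mul_le_mul_of_nonneg_right _ hK0
          exact mul_le_mul_of_nonneg_left h3 (by positivity)
      _ = Ch * Real.exp (-β * t) * K := by ring
  have hle : ‖Δ' θ - Δ θ‖ ≤ 0 := ge_of_tendsto hten hev
  have := norm_le_zero_iff.mp hle
  exact sub_eq_zero.mp this
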